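/- BC₁ A⁰ parameter-shift identity: let [·] be an odd function satisfying the Riemann relation, δ ∈ ℂ*, ω_r ∈ ℂ, and a = (a₀,…,a₇) ∈ ℂ⁸. Define A⁰_r(x; a|c) = κ · [x±c] ∏_{p=0}^7 [½(ω_r - δ) + a_p] / (2 [½(ω_r-δ) ± x][½(ω_r-δ) ± c]) where the constant κ depends only on r and the parameters but not on x or c. Then for any c, c' (with denominators nonzero): A⁰_r(x; a|c) - A⁰_r(x; a|c') = A⁰_r(c'; a|c). -/

import Mathlib

open Finset

/-- The `BC₁` zero-shift coefficient
`A⁰_r(x;a|c) = κ · [x±c] ∏_p [½(ω_r-δ)+a_p] / (2[½(ω_r-δ)±x][½(ω_r-δ)±c])`,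
where `κ` does not depend on `x` or `c`. -/
noncomputable def A0coef (f : ℂ → ℂ) (κ δ ω : ℂ) (a : Fin 8 → ℂ) (x c : ℂ) : ℂ :=
  κ * (f (x + c) * f (x - c)) * (∏ p, f ((ω - δ) / 2 + a p)) /
    (2 * (f ((ω - δ) / 2 + x) * f ((ω - δ) / 2 - x)) *
      (f ((ω - δ) / 2 + c) * f ((ω - δ) / 2 - c)))

/-- `BC₁` parameter-shift identity:
`A⁰_r(x;a|c) - A⁰_r(x;a|c') = A⁰_r(c';a|c)`. -/
theorem A0_parameter_shift (f : ℂ → ℂ)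
    (hodd : ∀ u : ℂ, f (-u) = -f u)
    (hR : ∀ x y u v : ℂ,
      f (x + u) * f (x - u) * (f (y + v) * f (y - v)) -
        f (x + v) * f (x - v) * (f (y + u) * f (y - u)) =
      f (x + y) * f (x - y) * (f (u + v) * f (u - v)))
    (κ δ ω : ℂ) (hδ : δ ≠ 0) (a : Fin 8 → ℂ) (x c c' : ℂ)
    (hx1 : f ((ω - δ) / 2 + x) ≠ 0) (hx2 : f ((ω - δ) / 2 - x) ≠ 0)
    (hc1 : f ((ω - δ) / 2 + c) ≠ 0) (hc2 : f ((ω - δ) / 2 - c) ≠ 0)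
    (hc'1 : f ((ω - δ) / 2 + c') ≠ 0) (hc'2 : f ((ω - δ) / 2 - c') ≠ 0) :
    A0coef f κ δ ω a x c - A0coef f κ δ ω a x c' = A0coef f κ δ ω a c' c := by
  have key : f (x + c) * f (x - c) * (f ((ω - δ) / 2 + c') * f ((ω - δ) / 2 - c')) -
      f (x + c') * f (x - c') * (f ((ω - δ) / 2 + c) * f ((ω - δ) / 2 - c)) =
      f ((ω - δ) / 2 + x) * f ((ω - δ) / 2 - x) * (f (c' + c) * f (c' - c)) := by
    have h1 := hR x ((ω - δ) / 2) c c'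
    have h2 : f (x - (ω - δ) / 2) = -f ((ω - δ) / 2 - x) := by
      rw [show x - (ω - δ) / 2 = -((ω - δ) / 2 - x) by ring, hodd]
    have h3 : f (c - c') = -f (c' - c) := by
      rw [show c - c' = -(c' - c) by ring, hodd]
    have h4 : f (c + c') = f (c' + c) := by rw [add_comm]
    have h5 : f (x + (ω - δ) / 2) = f ((ω - δ) / 2 + x) := by rw [add_comm]
    rw [h2, h3, h4, h5] at h1
    linear_combination h1
  unfold A0coef
  set P := ∏ p, f ((ω - δ) / 2 + a p) with hP
  set A := f ((ω - δ) / 2 + x) with hA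
  set B := f ((ω - δ) / 2 - x) with hB
  set C := f ((ω - δ) / 2 + c) with hC
  set D := f ((ω - δ) / 2 - c) with hD
  set C' := f ((ω - δ) / 2 + c') with hC'
  set D' := f ((ω - δ) / 2 - c') with hD'
  field_simp
  linear_combination κ * P * key
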